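/- Let g : ℝ^d × ℝ^d → [0, ∞) be measurable and symmetric (g(ξ, ξ̃) = g(ξ̃, ξ)), let ψ : ℝ → ℝ be monotonically nondecreasing with ψ(0) = 0, and let f : ℝ^d → ℝ be measurable. Assume the functions (ξ, ξ̃) ↦ ψ(f(ξ)) f(ξ̃) g(ξ, ξ̃), (ξ, ξ̃) ↦ ψ(f(ξ)) f(ξ) g(ξ, ξ̃) and ξ ↦ ψ(f(ξ)) f(ξ) are integrable, and that P1(ξ) := ∫ g(ξ, ξ̃) dξ̃ ≤ 1 for almost every ξ. Then ∫ ψ(f(ξ)) (Pf(ξ) − f(ξ)) dξ ≤ 0, where Pf(ξ) := ∫ f(ξ̃) g(ξ, ξ̃) dξ̃. -/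
import Mathlib


open MeasureTheory

/-- Dissipativity inequality `⟨ψ(f), (P − I)f⟩ ≤ 0` from the proof of Lemma 3.5 (Claim 1):
for a symmetric nonnegative kernel `g` with `P1 ≤ 1` a.e., a nondecreasing `ψ` with
`ψ 0 = 0`, and measurable `f`, under the stated integrability assumptions,
`∫ ψ(f ξ)(Pf(ξ) − f ξ) dξ ≤ 0`. -/
theorem dissipativity_inequality
    (d : ℕ)
    (g : EuclideanSpace ℝ (Fin d) → EuclideanSpace ℝ (Fin d) → ℝ)
    (hg_meas : Measurable (Function.uncurry g))
    (hg_nonneg : ∀ ξ ξt, 0 ≤ g ξ ξt)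
    (hg_symm : ∀ ξ ξt, g ξ ξt = g ξt ξ)
    (ψ : ℝ → ℝ) (hψ : Monotone ψ) (hψ0 : ψ 0 = 0)
    (f : EuclideanSpace ℝ (Fin d) → ℝ) (hf : Measurable f)
    (h1 : Integrable (fun p : EuclideanSpace ℝ (Fin d) × EuclideanSpace ℝ (Fin d) =>
            ψ (f p.1) * f p.2 * g p.1 p.2) (volume.prod volume))
    (h2 : Integrable (fun p : EuclideanSpace ℝ (Fin d) × EuclideanSpace ℝ (Fin d) =>
            ψ (f p.1) * f p.1 * g p.1 p.2) (volume.prod volume))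
    (h3 : Integrable (fun ξ => ψ (f ξ) * f ξ) volume)
    (hP1 : ∀ᵐ ξ ∂(volume : Measure (EuclideanSpace ℝ (Fin d))), (∫ ξt, g ξ ξt) ≤ 1) :
    ∫ ξ, ψ (f ξ) * ((∫ ξt, f ξt * g ξ ξt) - f ξ) ≤ 0 := by
  have hψf : ∀ ξ, 0 ≤ ψ (f ξ) * f ξ := by
    intro ξ
    rcases le_total 0 (f ξ) with h | h
    · exact mul_nonneg (hψ0 ▸ hψ h) h
    · exact mul_nonneg_iff.2 (Or.inr ⟨hψ0 ▸ hψ h, h⟩)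
  have h1' : Integrable (fun p : EuclideanSpace ℝ (Fin d) × EuclideanSpace ℝ (Fin d) =>
      ψ (f p.2) * f p.1 * g p.1 p.2) (volume.prod volume) := by
    refine h1.swap.congr (Filter.Eventually.of_forall fun p => ?_)
    simp [Function.comp, hg_symm p.2 p.1]
  have h2' : Integrable (fun p : EuclideanSpace ℝ (Fin d) × EuclideanSpace ℝ (Fin d) =>
      ψ (f p.2) * f p.2 * g p.1 p.2) (volume.prod volume) := by
    refine h2.swap.congr (Filter.Eventually.of_forall fun p => ?_)
    simp [Function.comp, hg_symm p.2 p.1]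
  set A := ∫ p : EuclideanSpace ℝ (Fin d) × EuclideanSpace ℝ (Fin d),
      ψ (f p.1) * f p.2 * g p.1 p.2 ∂(volume.prod volume) with hA
  set B := ∫ p : EuclideanSpace ℝ (Fin d) × EuclideanSpace ℝ (Fin d),
      ψ (f p.1) * f p.1 * g p.1 p.2 ∂(volume.prod volume) with hB
  set C := ∫ ξ, ψ (f ξ) * f ξ with hC
  have hA' : ∫ p : EuclideanSpace ℝ (Fin d) × EuclideanSpace ℝ (Fin d),
      ψ (f p.2) * f p.1 * g p.1 p.2 ∂(volume.prod volume) = A := by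
    rw [hA, ← integral_prod_swap (fun p : EuclideanSpace ℝ (Fin d) × EuclideanSpace ℝ (Fin d) =>
      ψ (f p.1) * f p.2 * g p.1 p.2)]
    exact integral_congr_ae (Filter.Eventually.of_forall fun p => by
      simp [Prod.swap, hg_symm p.2 p.1])
  have hB' : ∫ p : EuclideanSpace ℝ (Fin d) × EuclideanSpace ℝ (Fin d),
      ψ (f p.2) * f p.2 * g p.1 p.2 ∂(volume.prod volume) = B := by
    rw [hB, ← integral_prod_swap (fun p : EuclideanSpace ℝ (Fin d) × EuclideanSpace ℝ (Fin d) =>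
      ψ (f p.1) * f p.1 * g p.1 p.2)]
    exact integral_congr_ae (Filter.Eventually.of_forall fun p => by
      simp [Prod.swap, hg_symm p.2 p.1])
  have hL : ∫ ξ, ψ (f ξ) * ((∫ ξt, f ξt * g ξ ξt) - f ξ) = A - C := by
    have e1 : ∀ ξ, ψ (f ξ) * ((∫ ξt, f ξt * g ξ ξt) - f ξ)
        = (∫ ξt, ψ (f ξ) * f ξt * g ξ ξt) - ψ (f ξ) * f ξ := by
      intro ξ
      rw [mul_sub]
      congr 1
      rw [← integral_const_mul]
      exact integral_congr_ae (Filter.Eventually.of_forall fun ξt => by ring)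
    simp_rw [e1]
    rw [integral_sub h1.integral_prod_left h3, hA, hC]
    congr 1
    exact integral_integral (f := fun x y => ψ (f x) * f y * g x y) h1
  rw [hL]
  have hBeq : B = ∫ ξ, ψ (f ξ) * f ξ * (∫ ξt, g ξ ξt) := by
    rw [hB, ← integral_integral (f := fun x y => ψ (f x) * f x * g x y) h2]
    exact integral_congr_ae (Filter.Eventually.of_forall fun ξ =>
      integral_const_mul (ψ (f ξ) * f ξ) (g ξ))
  have hint : Integrable (fun ξ => ψ (f ξ) * f ξ * (∫ ξt, g ξ ξt)) volume := by
    refine h2.integral_prod_left.congr (Filter.Eventually.of_forall fun ξ => ?_)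
    exact integral_const_mul (ψ (f ξ) * f ξ) (g ξ)
  have hBC : B - C ≤ 0 := by
    rw [hBeq, hC, ← integral_sub hint h3]
    refine integral_nonpos_of_ae ?_
    filter_upwards [hP1] with ξ hξ
    have : ψ (f ξ) * f ξ * (∫ ξt, g ξ ξt) - ψ (f ξ) * f ξ
        = ψ (f ξ) * f ξ * ((∫ ξt, g ξ ξt) - 1) := by ring
    rw [this]
    exact mul_nonpos_of_nonneg_of_nonpos (hψf ξ) (by linarith)
  have hAB : A - B ≤ 0 := by
    have eadd1 : A + A = ∫ p : EuclideanSpace ℝ (Fin d) × EuclideanSpace ℝ (Fin d),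
        (ψ (f p.1) * f p.2 * g p.1 p.2 + ψ (f p.2) * f p.1 * g p.1 p.2)
        ∂(volume.prod volume) := by
      rw [integral_add h1 h1', hA', hA]
    have eadd2 : B + B = ∫ p : EuclideanSpace ℝ (Fin d) × EuclideanSpace ℝ (Fin d),
        (ψ (f p.1) * f p.1 * g p.1 p.2 + ψ (f p.2) * f p.2 * g p.1 p.2)
        ∂(volume.prod volume) := by
      rw [integral_add h2 h2', hB', hB]
    have esub := integral_sub (h1.add h1') (h2.add h2')
    simp only [Pi.add_apply] at esub
    have key : (A + A) - (B + B) ≤ 0 := by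
      rw [eadd1, eadd2, ← esub]
      refine integral_nonpos_of_ae (Filter.Eventually.of_forall fun p => ?_)
      simp only [Pi.zero_apply]
      have hmono : 0 ≤ (ψ (f p.1) - ψ (f p.2)) * (f p.1 - f p.2) := by
        rcases le_total (f p.1) (f p.2) with h | h
        · exact mul_nonneg_iff.2 (Or.inr ⟨by linarith [hψ h], by linarith⟩)
        · exact mul_nonneg (by linarith [hψ h]) (by linarith)
      have e : ψ (f p.1) * f p.2 * g p.1 p.2 + ψ (f p.2) * f p.1 * g p.1 p.2 -
          (ψ (f p.1) * f p.1 * g p.1 p.2 + ψ (f p.2) * f p.2 * g p.1 p.2)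
          = -((ψ (f p.1) - ψ (f p.2)) * (f p.1 - f p.2) * g p.1 p.2) := by ring
      rw [e]
      simpa using mul_nonneg hmono (hg_nonneg p.1 p.2)
    linarith
  linarith
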